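/- Let A_1, A_2, ω, R_1, R_2, ρ_0 > 0 with R_1 > R_2, and set α = (A_2R_2²/(A_1R_1(R_1 − R_2)))·exp(((2 + ω)(R_1 − R_2) − R_2)/R_2). Then for every ρ with 0 < ρ ≤ R_1ρ_0/(2 + ω + α), it holds that (A_1R_1ρ_0/ρ³)·(R_1ρ_0/ρ − 2 − ω)·exp(−R_1ρ_0/ρ) + (A_2R_2ρ_0/ρ³)·(R_2ρ_0/ρ − 2 − ω)·exp(−R_2ρ_0/ρ) ≥ 0. -/

import Mathlib

open Set Filter

/-- Convexity of the JWL reference function at moderate densities: for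
`0 < ρ ≤ R_1ρ_0/(2 + ω + α)`, the second derivative `h''(ρ)` of the JWL
reference function is nonnegative. -/
theorem jwl_h_second_deriv_nonneg
    (A1 A2 ω R1 R2 ρ0 : ℝ)
    (hA1 : 0 < A1) (hA2 : 0 < A2) (hω : 0 < ω)
    (hR1 : 0 < R1) (hR2 : 0 < R2) (hρ0 : 0 < ρ0) (hR : R2 < R1) :
    ∀ ρ : ℝ, 0 < ρ →
      ρ ≤ R1 * ρ0 / (2 + ω +
        A2 * R2 ^ 2 / (A1 * R1 * (R1 - R2)) *
          Real.exp (((2 + ω) * (R1 - R2) - R2) / R2)) →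
      0 ≤ A1 * R1 * ρ0 / ρ ^ 3 * (R1 * ρ0 / ρ - 2 - ω) *
            Real.exp (-(R1 * ρ0 / ρ))
        + A2 * R2 * ρ0 / ρ ^ 3 * (R2 * ρ0 / ρ - 2 - ω) *
            Real.exp (-(R2 * ρ0 / ρ)) := by
  intro ρ hρ hρle
  set b : ℝ := 2 + ω with hb
  set c : ℝ := R1 - R2 with hc
  have hcpos : 0 < c := by simp [hc]; linarith
  set α : ℝ := A2 * R2 ^ 2 / (A1 * R1 * c) * Real.exp ((b * c - R2) / R2) with hα
  have hαpos : 0 < α := by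
    apply mul_pos (div_pos (by positivity) (by positivity)) (Real.exp_pos _)
  have hbα : 0 < b + α := by
    have hbpos : 0 < b := by rw [hb]; linarith
    linarith
  set x : ℝ := ρ0 / ρ with hx
  have hxpos : 0 < x := div_pos hρ0 hρ
  -- from hρle : ρ ≤ R1 * ρ0 / (b + α), deduce b + α ≤ R1 * x
  have hRx : b + α ≤ R1 * x := by
    have h1 : ρ * (b + α) ≤ R1 * ρ0 := by
      have := (div_le_div_iff₀ hbα hbα).mp (le_refl (R1 * ρ0 / (b + α)))
      calc ρ * (b + α) ≤ (R1 * ρ0 / (b + α)) * (b + α) := by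
            exact mul_le_mul_of_nonneg_right hρle hbα.le
        _ = R1 * ρ0 := div_mul_cancel₀ _ (ne_of_gt hbα)
    rw [hx, mul_div_assoc']
    exact (le_div_iff₀ hρ).mpr (by linarith [h1])
  -- key inequality: (b - R2*x) * exp (c*x) ≤ R2/c * exp ((b*c - R2)/R2)
  set s : ℝ := b * c / R2 - 1 - c * x with hs
  have hs1 : s + 1 ≤ Real.exp s := Real.add_one_le_exp s
  have key : (b - R2 * x) * Real.exp (c * x) ≤ R2 / c * Real.exp ((b * c - R2) / R2) := by
    have h2 : b - R2 * x = R2 / c * (s + 1) := by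
      field_simp [hs]
      rw [hs]; field_simp; ring
    have h3 : (b * c - R2) / R2 = s + c * x := by
      field_simp [hs]
      rw [hs]; field_simp; ring
    rw [h2, h3, Real.exp_add]
    have h4 := mul_le_mul_of_nonneg_right hs1 (Real.exp_pos (c * x)).le
    have h5 : (0:ℝ) ≤ R2 / c := by positivity
    rw [mul_assoc]
    exact mul_le_mul_of_nonneg_left h4 h5
  -- multiply by A2 * R2
  have key2 : A2 * R2 * (b - R2 * x) * Real.exp (c * x) ≤ A1 * R1 * α := by
    have := mul_le_mul_of_nonneg_left key (by positivity : (0:ℝ) ≤ A2 * R2)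
    calc A2 * R2 * (b - R2 * x) * Real.exp (c * x)
        = A2 * R2 * ((b - R2 * x) * Real.exp (c * x)) := by ring
      _ ≤ A2 * R2 * (R2 / c * Real.exp ((b * c - R2) / R2)) := this
      _ = A1 * R1 * α := by
          rw [hα]; field_simp
  have key3 : A1 * R1 * α ≤ A1 * R1 * (R1 * x - b) := by
    have : α ≤ R1 * x - b := by linarith
    exact mul_le_mul_of_nonneg_left this (by positivity)
  -- multiply by exp (-(R1*x))
  have key4 : A2 * R2 * (b - R2 * x) * Real.exp (-(R2 * x)) ≤
      A1 * R1 * (R1 * x - b) * Real.exp (-(R1 * x)) := by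
    have h5 := mul_le_mul_of_nonneg_right (key2.trans key3) (Real.exp_pos (-(R1 * x))).le
    have h6 : Real.exp (c * x) * Real.exp (-(R1 * x)) = Real.exp (-(R2 * x)) := by
      rw [← Real.exp_add]; congr 1; rw [hc]; ring
    calc A2 * R2 * (b - R2 * x) * Real.exp (-(R2 * x))
        = A2 * R2 * (b - R2 * x) * Real.exp (c * x) * Real.exp (-(R1 * x)) := by
          rw [mul_assoc (A2 * R2 * (b - R2 * x)), h6]
      _ ≤ A1 * R1 * (R1 * x - b) * Real.exp (-(R1 * x)) := h5
  have hmain : 0 ≤ A1 * R1 * (R1 * x - b) * Real.exp (-(R1 * x)) +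
      A2 * R2 * (R2 * x - b) * Real.exp (-(R2 * x)) := by nlinarith [key4]
  have hcoef : 0 < ρ0 / ρ ^ 3 := by positivity
  have hrw1 : R1 * ρ0 / ρ = R1 * x := by rw [hx]; ring
  have hrw2 : R2 * ρ0 / ρ = R2 * x := by rw [hx]; ring
  rw [hrw1, hrw2]
  have : A1 * R1 * ρ0 / ρ ^ 3 * (R1 * x - 2 - ω) * Real.exp (-(R1 * x))
      + A2 * R2 * ρ0 / ρ ^ 3 * (R2 * x - 2 - ω) * Real.exp (-(R2 * x))
      = (ρ0 / ρ ^ 3) * (A1 * R1 * (R1 * x - b) * Real.exp (-(R1 * x)) +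
        A2 * R2 * (R2 * x - b) * Real.exp (-(R2 * x))) := by
    rw [hb]; ring
  rw [this]
  exact mul_nonneg hcoef.le hmain
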